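/- Let V be a finite-dimensional vector space over a field of characteristic p, with an endomorphism d satisfying d^p = 0. Then V is a free module over k[d]/(d^p) if and only if ker(d) = im(d^{p-1}). -/

import Mathlib

open Polynomial
set_option maxHeartbeats 1000000
set_option linter.unusedSectionVars false
set_option synthInstance.maxHeartbeats 400000

namespace Stmt18Aux
variable {k : Type} [Field k] {p : ℕ}

noncomputable abbrev Iq (k : Type) [Field k] (p : ℕ) : Ideal (Polynomial k) :=
  Ideal.span {(X : Polynomial k) ^ p}

noncomputable def xi (k : Type) [Field k] (p : ℕ) : Polynomial k ⧸ Iq k p :=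
  Ideal.Quotient.mk _ X

lemma xi_pow_p : xi k p ^ p = 0 := by
  rw [xi, ← map_pow, Ideal.Quotient.eq_zero_iff_mem]
  exact Ideal.subset_span rfl

noncomputable def eps (k : Type) [Field k] (p : ℕ) (hp : 0 < p) :
    (Polynomial k ⧸ Iq k p) →ₐ[k] k :=
  Ideal.Quotient.liftₐ _ (aeval (0 : k)) (by
    intro a ha
    rw [Iq, Ideal.mem_span_singleton] at ha
    obtain ⟨b, rfl⟩ := ha
    simp [zero_pow hp.ne'])

lemma eps_mk (hp : 0 < p) (f : Polynomial k) :
    eps k p hp (Ideal.Quotient.mk _ f) = f.coeff 0 := by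
  show aeval (0 : k) f = f.coeff 0
  simp [coeff_zero_eq_eval_zero]

lemma xi_pow_mul (hp : 0 < p) (a : Polynomial k ⧸ Iq k p) :
    xi k p ^ (p - 1) * a = eps k p hp a • xi k p ^ (p - 1) := by
  obtain ⟨f, rfl⟩ := Ideal.Quotient.mk_surjective a
  rw [eps_mk, xi, ← map_pow, ← map_mul]
  have : f.coeff 0 • (Ideal.Quotient.mk (Iq k p)) (X ^ (p - 1)) =
      Ideal.Quotient.mk (Iq k p) (C (f.coeff 0) * X ^ (p - 1)) := by
    rw [← smul_eq_C_mul, ← Ideal.Quotient.mkₐ_eq_mk k, map_smul]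
  rw [this, Ideal.Quotient.eq]
  have hf : X ^ (p - 1) * f - C (f.coeff 0) * X ^ (p - 1) = X ^ p * f.divX := by
    have h2 : (X : Polynomial k) ^ p = X ^ (p - 1) * X := by
      rw [← pow_succ, Nat.sub_add_cancel hp]
    nth_rewrite 1 [← X_mul_divX_add f]
    rw [h2]; ring
  rw [hf, Iq, Ideal.mem_span_singleton]
  exact Dvd.intro _ rfl

lemma eq_xi_mul (hp : 0 < p) (a : Polynomial k ⧸ Iq k p) (h : eps k p hp a = 0) :
    ∃ a', a = xi k p * a' := by
  obtain ⟨f, rfl⟩ := Ideal.Quotient.mk_surjective a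
  rw [eps_mk] at h
  refine ⟨Ideal.Quotient.mk _ f.divX, ?_⟩
  rw [xi, ← map_mul]
  congr 1
  conv_lhs => rw [← X_mul_divX_add f, h]
  simp

lemma eq_xi_pow_mul (hp : 0 < p) (a : Polynomial k ⧸ Iq k p) (h : xi k p * a = 0) :
    ∃ a', a = xi k p ^ (p - 1) * a' := by
  obtain ⟨f, rfl⟩ := Ideal.Quotient.mk_surjective a
  rw [xi, ← map_mul, Ideal.Quotient.eq_zero_iff_mem, Iq, Ideal.mem_span_singleton] at h
  have hdvd : (X : Polynomial k) ^ (p - 1) ∣ f := by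
    have hx : (X : Polynomial k) ^ p = X * X ^ (p - 1) := by
      rw [← pow_succ', Nat.sub_add_cancel hp]
    rw [hx] at h
    exact (mul_dvd_mul_iff_left (X_ne_zero (R := k))).mp h
  obtain ⟨g, rfl⟩ := hdvd
  exact ⟨Ideal.Quotient.mk _ g, by rw [xi, ← map_pow, ← map_mul]⟩

variable {V : Type} [AddCommGroup V] [Module k V]
  [Module (Polynomial k ⧸ Iq k p) V] [IsScalarTower k (Polynomial k ⧸ Iq k p) V]

/-- Forward direction: if `V` is free then `ker d = im d^{p-1}`. -/
lemma ker_eq_range (hp : 0 < p) [Module.Free (Polynomial k ⧸ Iq k p) V] :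
    {v : V | xi k p • v = 0} = Set.range (fun v : V => (xi k p ^ (p - 1)) • v) := by
  ext v
  simp only [Set.mem_setOf_eq, Set.mem_range]
  constructor
  · intro hv
    set B := Module.Free.chooseBasis (Polynomial k ⧸ Iq k p) V with hB
    set c := B.repr v with hc
    have hci : ∀ i, xi k p * c i = 0 := by
      intro i
      have h1 : B.repr (xi k p • v) = xi k p • B.repr v := B.repr.map_smul (xi k p) v
      rw [hv, map_zero] at h1
      have h2 : (xi k p • B.repr v) i = 0 := by rw [← h1]; rfl
      rw [Finsupp.smul_apply, smul_eq_mul] at h2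
      exact h2
    choose a ha using fun i => eq_xi_pow_mul hp (c i) (hci i)
    refine ⟨∑ i ∈ c.support, a i • B i, ?_⟩
    rw [Finset.smul_sum]
    have hterm : ∀ i ∈ c.support, xi k p ^ (p - 1) • (a i • B i) = c i • B i := by
      intro i _
      rw [smul_smul, ← ha i]
    rw [Finset.sum_congr rfl hterm]
    have := B.linearCombination_repr v
    rw [Finsupp.linearCombination_apply, Finsupp.sum] at this
    exact this
  · rintro ⟨u, rfl⟩
    rw [smul_smul, ← pow_succ', Nat.sub_add_cancel hp, xi_pow_p]
    exact zero_smul (Polynomial k ⧸ Iq k p) u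

/-- The kernel of the action of `xi`, as a `k`-submodule. -/
noncomputable def kerXi (k : Type) [Field k] (p : ℕ) (V : Type) [AddCommGroup V] [Module k V]
    [Module (Polynomial k ⧸ Iq k p) V] [IsScalarTower k (Polynomial k ⧸ Iq k p) V] :
    Submodule k V where
  carrier := {v | xi k p • v = 0}
  add_mem' := by
    intro a b ha hb
    simp only [Set.mem_setOf_eq, smul_add] at *
    rw [ha, hb, add_zero]
  zero_mem' := smul_zero _
  smul_mem' := by
    intro c v hv
    simp only [Set.mem_setOf_eq] at *
    rw [smul_comm (xi k p) c v, hv, smul_zero]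

/-- Backward direction: if `ker d = im d^{p-1}` then `V` is free. -/
lemma free_of_ker_eq_range (hp : 0 < p) [FiniteDimensional k V]
    (h : {v : V | xi k p • v = 0} = Set.range (fun v : V => (xi k p ^ (p - 1)) • v)) :
    Module.Free (Polynomial k ⧸ Iq k p) V := by
  set K := kerXi k p V with hK
  set B := Module.finBasis k K with hB
  set b : Fin (Module.finrank k K) → V := fun i => (B i : V) with hb
  have hbind : LinearIndependent k b := B.linearIndependent.map' K.subtype K.ker_subtype
  have hbker : ∀ i, xi k p • b i = 0 := fun i => (B i).2
  have hex : ∀ i, ∃ u : V, xi k p ^ (p - 1) • u = b i := by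
    intro i
    have : b i ∈ {v : V | xi k p • v = 0} := hbker i
    rw [h] at this
    exact this
  choose w hw using hex
  -- Linear independence of w over the quotient ring
  have hind : LinearIndependent (Polynomial k ⧸ Iq k p) w := by
    rw [Fintype.linearIndependent_iff]
    intro g hg
    have key : ∀ j, j ≤ p → ∀ i, ∃ a, g i = xi k p ^ j * a := by
      intro j
      induction j with
      | zero => intro _ i; exact ⟨g i, by simp⟩
      | succ j ih =>
        intro hj i0
        have hjp : j ≤ p - 1 := Nat.le_pred_of_lt hj
        choose a ha using ih (Nat.le_of_succ_le hj)
        have e1 : ∀ i, xi k p ^ (p - 1 - j) • (g i • w i) = eps k p hp (a i) • b i := by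
          intro i
          rw [ha i, smul_smul, ← mul_assoc, ← pow_add, Nat.sub_add_cancel hjp,
            xi_pow_mul hp, smul_assoc, hw i]
        have hsum : ∑ i, eps k p hp (a i) • b i = 0 := by
          calc ∑ i, eps k p hp (a i) • b i
              = ∑ i, xi k p ^ (p - 1 - j) • (g i • w i) :=
                (Finset.sum_congr rfl fun i _ => (e1 i)).symm
            _ = xi k p ^ (p - 1 - j) • ∑ i, g i • w i := (Finset.smul_sum).symm
            _ = 0 := by rw [hg, smul_zero]
        have hz : ∀ i, eps k p hp (a i) = 0 :=
          Fintype.linearIndependent_iff.mp hbind _ hsum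
        obtain ⟨a', ha'⟩ := eq_xi_mul hp (a i0) (hz i0)
        exact ⟨a', by rw [ha i0, ha', ← mul_assoc, ← pow_succ]⟩
    intro i
    obtain ⟨a, ha⟩ := key p le_rfl i
    rw [ha, xi_pow_p, zero_mul]
  -- Spanning
  have hspan : ∀ j : ℕ, ∀ v : V, xi k p ^ j • v = 0 →
      v ∈ Submodule.span (Polynomial k ⧸ Iq k p) (Set.range w) := by
    intro j
    induction j with
    | zero =>
      intro v hv
      rw [pow_zero, one_smul] at hv
      rw [hv]; exact Submodule.zero_mem _
    | succ j ih =>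
      intro v hv
      by_cases hjp : p ≤ j
      · apply ih
        obtain ⟨m, rfl⟩ := Nat.exists_eq_add_of_le hjp
        rw [pow_add, xi_pow_p, zero_mul]; exact zero_smul (Polynomial k ⧸ Iq k p) v
      · push_neg at hjp
        have hj1 : j ≤ p - 1 := Nat.le_pred_of_lt hjp
        have hker : xi k p • (xi k p ^ j • v) = 0 := by
          rw [smul_smul, ← pow_succ']
          exact hv
        set m : K := ⟨xi k p ^ j • v, hker⟩ with hm
        have hrepr : ∑ i, (B.repr m) i • b i = xi k p ^ j • v := by
          have h2 := congrArg K.subtype (B.sum_repr m)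
          simp only [map_sum, map_smul] at h2; exact h2
        set u : V := ∑ i, ((B.repr m) i • xi k p ^ (p - 1 - j)) • w i with hu
        have humem : u ∈ Submodule.span (Polynomial k ⧸ Iq k p) (Set.range w) :=
          Submodule.sum_mem _ fun i _ =>
            Submodule.smul_mem _ _ (Submodule.subset_span ⟨i, rfl⟩)
        have hju : xi k p ^ j • u = xi k p ^ j • v := by
          rw [hu, Finset.smul_sum, ← hrepr]
          refine Finset.sum_congr rfl fun i _ => ?_
          rw [smul_smul, mul_smul_comm, ← pow_add, Nat.add_sub_cancel' hj1,
            smul_assoc, hw i]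
        have hvu : xi k p ^ j • (v - u) = 0 := by
          rw [smul_sub, hju, sub_self]
        have := ih _ hvu
        have hveq : v = (v - u) + u := by abel
        rw [hveq]
        exact Submodule.add_mem _ this humem
  have htop : ⊤ ≤ Submodule.span (Polynomial k ⧸ Iq k p) (Set.range w) := by
    intro v _
    exact hspan p v (by rw [xi_pow_p]; exact zero_smul (Polynomial k ⧸ Iq k p) v)
  exact Module.Free.of_basis (Module.Basis.mk hind htop)

end Stmt18Aux


open Polynomial

/-- Let `V` be a finite-dimensional vector space over a field `k` of characteristic `p`,
equipped with a module structure over `H = k[X]/(X^p)` (equivalently, with a `p`-nilpotent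
endomorphism `d`, the action of `X`).  Then `V` is a free `H`-module if and only if
`ker d = im d^{p-1}`. -/
theorem stmt18 {p : ℕ} (hp : p.Prime) {k : Type} [Field k] [CharP k p]
    {V : Type} [AddCommGroup V] [Module k V]
    [Module (Polynomial k ⧸ Ideal.span {(X : Polynomial k) ^ p}) V]
    [IsScalarTower k (Polynomial k ⧸ Ideal.span {(X : Polynomial k) ^ p}) V]
    [FiniteDimensional k V] :
    Module.Free (Polynomial k ⧸ Ideal.span {(X : Polynomial k) ^ p}) V ↔
      {v : V | (Ideal.Quotient.mk (Ideal.span {(X : Polynomial k) ^ p}) X) • v = 0} =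
        Set.range (fun v : V =>
          ((Ideal.Quotient.mk (Ideal.span {(X : Polynomial k) ^ p}) X) ^ (p - 1)) • v) := by
  constructor
  · intro hfree
    exact Stmt18Aux.ker_eq_range hp.pos
  · intro h
    exact Stmt18Aux.free_of_ker_eq_range hp.pos h
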